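/- For every natural number m and every i with 1 ≤ i ≤ n, the i-th coordinate of D^m η_n equals the number of weakly increasing sequences j₀ ≤ j₁ ≤ … ≤ j_m of elements of {1,…,n} with j₀ = i and j_m = n. (These sequences correspond to the directed paths of length m from v_i to v_n in the graph G_n, which has vertices v_1,…,v_n and one edge from v_i to v_j for each pair i ≤ j.) -/

import Mathlib

/-!
`ℤⁿ` is the abelian group of functions `Fin n → ℤ` (coordinates `1,…,n`
corresponding to indices `0,…,n-1`).  `shiftE n` is the shift operator `t`,
`(tη)(i) = η(i+1)` for `i < n` and `(tη)(n) = 0`, and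
`DE n = 1 + t + t² + … + t^{n−1}`.
-/

noncomputable section

/-- The shift operator `t` on `ℤⁿ`. -/
def shiftE (n : ℕ) : Module.End ℤ (Fin n → ℤ) :=
  (AddMonoidHom.mk' (fun (η : Fin n → ℤ) (i : Fin n) => if h : (i : ℕ) + 1 < n then η ⟨(i : ℕ) + 1, h⟩ else 0) (by
    intro a b
    funext i
    by_cases h : (i : ℕ) + 1 < n <;> simp [h])).toIntLinearMap

/-- The operator `D = 1 + t + t² + … + t^{n−1}` on `ℤⁿ`. -/
def DE (n : ℕ) : Module.End ℤ (Fin n → ℤ) := ∑ i ∈ Finset.range n, shiftE n ^ i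

lemma shiftE_apply' (n : ℕ) (η : Fin n → ℤ) (i : Fin n) :
    shiftE n η i = if h : (i : ℕ) + 1 < n then η ⟨(i : ℕ) + 1, h⟩ else 0 := rfl

lemma shiftE_pow_apply (n k : ℕ) (η : Fin n → ℤ) (i : Fin n) :
    ((shiftE n ^ k) η) i = if h : (i : ℕ) + k < n then η ⟨(i : ℕ) + k, h⟩ else 0 := by
  induction k generalizing i with
  | zero => simp [i.isLt]
  | succ k ih =>
    rw [pow_succ']
    have hrw : ((shiftE n * shiftE n ^ k) η) i = shiftE n ((shiftE n ^ k) η) i := rfl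
    rw [hrw, shiftE_apply']
    by_cases h : (i : ℕ) + 1 < n
    · rw [dif_pos h, ih]
      by_cases h2 : (i : ℕ) + 1 + k < n
      · rw [dif_pos h2, dif_pos (show (i : ℕ) + (k + 1) < n by omega)]
        congr 1
        exact Fin.ext (by simp; omega)
      · rw [dif_neg h2, dif_neg (show ¬ ((i : ℕ) + (k + 1) < n) by omega)]
    · rw [dif_neg h, dif_neg (show ¬ ((i : ℕ) + (k + 1) < n) by omega)]

lemma DE_apply (n : ℕ) (η : Fin n → ℤ) (i : Fin n) :
    DE n η i = ∑ j : Fin n, if i ≤ j then η j else 0 := by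
  have hrw : DE n η i = ∑ k ∈ Finset.range n, ((shiftE n ^ k) η) i := by
    simp [DE]
  rw [hrw]
  simp_rw [shiftE_pow_apply]
  rw [← Finset.sum_filter]
  rw [← Finset.sum_filter_of_ne (p := fun k => (i : ℕ) + k < n)
    (by intro x hx hne; by_contra h; rw [dif_neg h] at hne; exact hne rfl)]
  refine Finset.sum_bij' (fun k hk => (⟨(i : ℕ) + k, (Finset.mem_filter.mp hk).2⟩ : Fin n))
    (fun j _ => (j : ℕ) - (i : ℕ)) ?_ ?_ ?_ ?_ ?_
  · intro k hk
    simp only [Finset.mem_filter, Finset.mem_univ, true_and]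
    exact Fin.mk_le_mk.mpr (by omega) |>.trans_eq rfl
  · intro j hj
    have hij : (i : ℕ) ≤ (j : ℕ) := (Finset.mem_filter.mp hj).2
    simp only [Finset.mem_filter, Finset.mem_range]
    constructor
    · omega
    · have := j.isLt; omega
  · intro k hk
    simp
  · intro j hj
    have hij : (i : ℕ) ≤ (j : ℕ) := (Finset.mem_filter.mp hj).2
    exact Fin.ext (by simp; omega)
  · intro k hk
    rw [dif_pos (Finset.mem_filter.mp hk).2]

lemma count_step (n m : ℕ) (i l : Fin n) :
    Nat.card {f : Fin (m + 2) → Fin n // Monotone f ∧ f 0 = i ∧ f (Fin.last (m + 1)) = l}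
    = ∑ j : Fin n, if i ≤ j then
        Nat.card {g : Fin (m + 1) → Fin n // Monotone g ∧ g 0 = j ∧ g (Fin.last m) = l} else 0 := by
  classical
  have hc : ∀ (k : ℕ) (p : (Fin k → Fin n) → Prop),
      Nat.card {f // p f} = (Finset.univ.filter p).card := by
    intro k p
    rw [Nat.card_eq_fintype_card, Fintype.card_subtype]
  rw [hc]
  simp_rw [hc]
  rw [Finset.card_eq_sum_card_fiberwise (f := fun f => f 1) (t := Finset.univ)
    (fun _ _ => Finset.mem_univ _)]
  refine Finset.sum_congr rfl fun j _ => ?_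
  by_cases hij : i ≤ j
  · rw [if_pos hij]
    apply Finset.card_nbij' (fun f (k : Fin (m + 1)) => f k.succ) (fun g => Fin.cons i g)
    · intro f hf
      simp only [Finset.mem_coe, Finset.mem_filter, Finset.mem_univ, true_and] at hf ⊢
      obtain ⟨⟨hm, h0, hl⟩, h1⟩ := hf
      refine ⟨hm.comp Fin.strictMono_succ.monotone, ?_, ?_⟩
      · rw [Fin.succ_zero_eq_one, h1]
      · rw [Fin.succ_last, hl]
    · intro g hg
      simp only [Finset.mem_coe, Finset.mem_filter, Finset.mem_univ, true_and] at hg ⊢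
      obtain ⟨hm, h0, hl⟩ := hg
      refine ⟨⟨?_, ?_, ?_⟩, ?_⟩
      · rw [Fin.monotone_iff_le_succ]
        intro k
        induction k using Fin.cases with
        | zero =>
          rw [Fin.castSucc_zero, Fin.cons_zero, Fin.cons_succ, h0]
          exact hij
        | succ k' =>
          rw [← Fin.succ_castSucc, Fin.cons_succ, Fin.cons_succ]
          exact hm (Fin.castSucc_le_succ k')
      · exact Fin.cons_zero _ _
      · rw [← Fin.succ_last, Fin.cons_succ, hl]
      · rw [show (1 : Fin (m + 2)) = (0 : Fin (m + 1)).succ from (Fin.succ_zero_eq_one).symm,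
          Fin.cons_succ, h0]
    · intro f hf
      simp only [Finset.mem_coe, Finset.mem_filter, Finset.mem_univ, true_and] at hf
      funext k
      beta_reduce
      induction k using Fin.cases with
      | zero => rw [Fin.cons_zero, hf.1.2.1]
      | succ k' => rw [Fin.cons_succ]
    · intro g _
      funext k
      beta_reduce
      rw [Fin.cons_succ]
  · rw [if_neg hij]
    rw [Finset.card_eq_zero, Finset.filter_eq_empty_iff]
    rintro f hf
    simp only [Finset.mem_filter, Finset.mem_univ, true_and] at hf
    obtain ⟨hm, h0, _⟩ := hf
    intro h1
    exact hij (h0 ▸ h1 ▸ hm (show (0 : Fin (m + 2)) ≤ 1 from Fin.zero_le _))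

/-- For every `m` and every `i`, the `i`-th coordinate of `D^m η_n` equals the number
of weakly increasing sequences `j₀ ≤ j₁ ≤ … ≤ j_m` in `{1,…,n}` with `j₀ = i` and
`j_m = n` (i.e. the number of directed paths of length `m` from `v_i` to `v_n` in the
graph `G_n`). -/
theorem Dpow_etaN_counts_paths (n : ℕ) (hn : 2 ≤ n) (m : ℕ) (i : Fin n) :
    ((DE n ^ m) (Pi.single (⟨n - 1, by omega⟩ : Fin n) (1 : ℤ))) i =
      (Nat.card {f : Fin (m + 1) → Fin n //
        Monotone f ∧ f 0 = i ∧ f (Fin.last m) = ⟨n - 1, by omega⟩} : ℤ) := by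
  induction m generalizing i with
  | zero =>
    rw [pow_zero, Module.End.one_apply]
    by_cases hi : i = (⟨n - 1, by omega⟩ : Fin n)
    · rw [hi, Pi.single_eq_same]
      rw [show Nat.card {f : Fin (0 + 1) → Fin n //
          Monotone f ∧ f 0 = (⟨n - 1, by omega⟩ : Fin n) ∧
            f (Fin.last 0) = (⟨n - 1, by omega⟩ : Fin n)} = 1 from ?_]
      · norm_num
      · rw [Nat.card_eq_one_iff_unique]
        constructor
        · constructor
          intro f g
          apply Subtype.ext
          funext k
          have hk : k = 0 := Subsingleton.elim (α := Fin 1) k 0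
          rw [hk, f.2.2.1, g.2.2.1]
        · exact ⟨⟨fun _ => ⟨n - 1, by omega⟩, monotone_const, rfl, rfl⟩⟩
    · rw [Pi.single_eq_of_ne hi]
      have : IsEmpty {f : Fin (0 + 1) → Fin n //
          Monotone f ∧ f 0 = i ∧ f (Fin.last 0) = (⟨n - 1, by omega⟩ : Fin n)} := by
        constructor
        rintro ⟨f, _, h0, hl⟩
        exact hi (h0 ▸ (show f (Fin.last 0) = f 0 from rfl) ▸ hl)
      rw [Nat.card_of_isEmpty]
      norm_num
  | succ m ih =>
    rw [pow_succ']
    rw [Module.End.mul_apply, DE_apply]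
    simp_rw [ih]
    rw [count_step n m i ⟨n - 1, by omega⟩]
    push_cast
    rfl
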